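/- Let φ(s,a) = 1/(1-s-a) and let (f₁, f₂) be the right-hand side of the SAIS system with awareness decay: f₁ = (1-s-a)(δ-(κ+β)s)+δₐa, f₂ = (1-s-a)(κs-βₐa)-δₐa. Then for all (s,a) with s+a < 1, the divergence ∂(φf₁)/∂s + ∂(φf₂)/∂a equals -(κ + β + βₐ) - δₐ/(1-s-a), which is strictly negative when β, βₐ, κ, δₐ > 0. -/

import Mathlib

/-- Dulac function computation: with φ(s,a) = 1/(1-s-a) the divergence of
(φf₁, φf₂) equals -(κ+β+βₐ) - δₐ/(1-s-a) < 0 for s+a < 1. -/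
theorem stmt_18
    (β βa κ δ δa : ℝ)
    (hβ : 0 < β) (hβa : 0 < βa) (hκ : 0 < κ) (hδ : 0 < δ) (hδa : 0 < δa)
    (f₁ f₂ : ℝ → ℝ → ℝ)
    (hf₁ : ∀ s a, f₁ s a = (1 - s - a) * (δ - (κ + β) * s) + δa * a)
    (hf₂ : ∀ s a, f₂ s a = (1 - s - a) * (κ * s - βa * a) - δa * a) :
    ∀ s a : ℝ, s + a < 1 →
      deriv (fun x => (1 / (1 - x - a)) * f₁ x a) s
        + deriv (fun y => (1 / (1 - s - y)) * f₂ s y) a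
        = -(κ + β + βa) - δa / (1 - s - a) ∧
      -(κ + β + βa) - δa / (1 - s - a) < 0 := by
  intro s a hsa
  have hu : (0:ℝ) < 1 - s - a := by linarith
  have hu0 : (1 - s - a) ≠ 0 := ne_of_gt hu
  -- first derivative
  have hU1 : HasDerivAt (fun x : ℝ => 1 - x - a) (-1) s := by
    simpa using ((hasDerivAt_id s).const_sub 1).sub_const a
  have hinv1 : HasDerivAt (fun x : ℝ => (1 - x - a)⁻¹)
      (-(-1) / (1 - s - a) ^ 2) s := hU1.inv hu0
  have hF1 : HasDerivAt (fun x : ℝ => (1 - x - a) * (δ - (κ + β) * x) + δa * a)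
      ((-1) * (δ - (κ + β) * s) + (1 - s - a) * (-(κ + β))) s := by
    have h2 : HasDerivAt (fun x : ℝ => δ - (κ + β) * x) (-(κ + β)) s := by
      simpa using ((hasDerivAt_id s).const_mul (κ + β)).const_sub δ
    simpa using (hU1.mul h2).add_const (δa * a)
  have hD1 : HasDerivAt (fun x : ℝ => (1 / (1 - x - a)) * f₁ x a)
      ((-(-1) / (1 - s - a) ^ 2) * ((1 - s - a) * (δ - (κ + β) * s) + δa * a)
        + (1 - s - a)⁻¹ * ((-1) * (δ - (κ + β) * s) + (1 - s - a) * (-(κ + β)))) s := by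
    have := hinv1.mul hF1
    simp only [hf₁, one_div]
    exact this
  -- second derivative
  have hU2 : HasDerivAt (fun y : ℝ => 1 - s - y) (-1) a := by
    simpa using (hasDerivAt_id a).const_sub (1 - s)
  have hinv2 : HasDerivAt (fun y : ℝ => (1 - s - y)⁻¹)
      (-(-1) / (1 - s - a) ^ 2) a := hU2.inv hu0
  have hF2 : HasDerivAt (fun y : ℝ => (1 - s - y) * (κ * s - βa * y) - δa * y)
      (((-1) * (κ * s - βa * a) + (1 - s - a) * (-βa)) - δa) a := by
    have h2 : HasDerivAt (fun y : ℝ => κ * s - βa * y) (-βa) a := by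
      simpa using ((hasDerivAt_id a).const_mul βa).const_sub (κ * s)
    have h3 : HasDerivAt (fun y : ℝ => δa * y) δa a := by
      simpa using (hasDerivAt_id a).const_mul δa
    exact ((hU2.mul h2).sub h3).congr_deriv (by ring)
  have hD2 : HasDerivAt (fun y : ℝ => (1 / (1 - s - y)) * f₂ s y)
      ((-(-1) / (1 - s - a) ^ 2) * ((1 - s - a) * (κ * s - βa * a) - δa * a)
        + (1 - s - a)⁻¹ * (((-1) * (κ * s - βa * a) + (1 - s - a) * (-βa)) - δa)) a := by
    have := hinv2.mul hF2
    simp only [hf₂, one_div]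
    exact this
  constructor
  · rw [hD1.deriv, hD2.deriv]
    field_simp
    ring
  · have h1 : 0 < δa / (1 - s - a) := div_pos hδa hu
    nlinarith
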